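/- If G is connected (under the path metric with R(u,v) = 1/C(u,v)), then any function f : V → ℝ with B(f,f) < ∞ satisfies |f(w) − f(v)|² ≤ 4 B(f,f) d(v,w) for all vertices v,w; hence f is uniformly continuous on G and extends uniquely to a continuous function on the completion Ḡ. -/

import Mathlib

open UniformSpace Filter Topology
open scoped ENNReal

noncomputable section

/-- A locally finite edge-weighted (resistance) graph. -/
structure WGraph (V : Type*) where
  Adj : V → V → Prop
  symm : ∀ u v, Adj u v → Adj v u
  loopless : ∀ v, ¬ Adj v v
  R : V → V → ℝ
  Rsymm : ∀ u v, R u v = R v u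
  Rpos : ∀ u v, Adj u v → 0 < R u v
  locFin : ∀ v, {u | Adj u v}.Finite

namespace WGraph

variable {V : Type*} (G : WGraph V)

/-- The set of edges, as unordered pairs of vertices. -/
def edgeSet : Set (Sym2 V) := {e | ∃ u v, G.Adj u v ∧ e = s(u, v)}

/-- The set of total lengths of finite paths joining `u` to `v`. -/
def pathLengths (u v : V) : Set ℝ :=
  {L | ∃ (n : ℕ) (p : ℕ → V), p 0 = u ∧ p n = v ∧
        (∀ k < n, G.Adj (p k) (p (k + 1))) ∧
        L = ∑ k ∈ Finset.range n, G.R (p k) (p (k + 1))}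

/-- `G` is connected: any two vertices are joined by a finite path. -/
def Connected : Prop := ∀ u v : V, (G.pathLengths u v).Nonempty

/-- The metric on the vertex set is the minimal resistance path metric of `G`. -/
def IsPathMetric [MetricSpace V] : Prop :=
  ∀ u v : V, dist u v = sInf (G.pathLengths u v)

/-- Eventually flat functions: the values differ across only finitely many edges. -/
def EventuallyFlat (φ : V → ℝ) : Prop :=
  {p : V × V | G.Adj p.1 p.2 ∧ φ p.1 ≠ φ p.2}.Finite

open Classical in
/-- The conductance: the reciprocal resistance on edges, `0` off edges. -/
def cond (u v : V) : ℝ := if G.Adj u v then (G.R u v)⁻¹ else 0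

/-- `f` is harmonic at `v`: its value is the conductance-weighted average of the
values at the adjacent vertices. -/
def HarmonicAt (f : V → ℝ) (v : V) : Prop :=
  f v = (∑ u ∈ (G.locFin v).toFinset, G.cond u v)⁻¹ *
          ∑ u ∈ (G.locFin v).toFinset, G.cond u v * f u

/-- The weighted `ℓ²(μ)` inner product. -/
def winner (μ : V → ℝ) (f g : V → ℝ) : ℝ := ∑' v, f v * g v * μ v

/-- The bilinear (energy) form associated to conductances `C`. -/
def Bform (C : V → V → ℝ) (f g : V → ℝ) : ℝ :=
  (1 / 2) * ∑' p : V × V, C p.1 p.2 * (f p.1 - f p.2) * (g p.1 - g p.2)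

/-- The formal Laplacian `Δ_μ`. -/
def lap (C : V → V → ℝ) (μ : V → ℝ) (f : V → ℝ) (v : V) : ℝ :=
  (1 / μ v) * ∑' u, C u v * (f v - f u)

/-- The (possibly infinite) energy of `f`. -/
def energy (C : V → V → ℝ) (f : V → ℝ) : ℝ≥0∞ :=
  (1 / 2) * ∑' p : V × V, ENNReal.ofReal (C p.1 p.2 * (f p.1 - f p.2) ^ 2)

variable [MetricSpace V]

/-- A path in the completion `Ḡ` joining `x` and `y`: a two-sided sequence of
vertices (stationary steps are allowed, so this encodes finite paths, rays and
double rays) converging to `x` and `y` at its two ends. -/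
structure CPath (x y : Completion V) where
  p : ℤ → V
  step : ∀ k, p k = p (k + 1) ∨ G.Adj (p k) (p (k + 1))
  tendsto_left : Tendsto (fun n : ℕ => ((p (-(n : ℤ)) : V) : Completion V)) atTop (nhds x)
  tendsto_right : Tendsto (fun n : ℕ => ((p (n : ℤ) : V) : Completion V)) atTop (nhds y)

end WGraph

/-- The path `γ` uses (contains) the edge `e`. -/
def WGraph.CPath.uses {V : Type*} [MetricSpace V] {G : WGraph V}
    {x y : Completion V} (γ : G.CPath x y) (e : Sym2 V) : Prop :=
  ∃ k : ℤ, γ.p k ≠ γ.p (k + 1) ∧ e = s(γ.p k, γ.p (k + 1))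

namespace WGraph

variable {V : Type*} (G : WGraph V) [MetricSpace V]

/-- The completion `Ḡ` is weakly connected: any two distinct points admit a
finite set of edges met by every path joining them. -/
def WeaklyConnected : Prop :=
  ∀ x y : Completion V, x ≠ y →
    ∃ W : Set (Sym2 V), W.Finite ∧ W ⊆ G.edgeSet ∧
      ∀ γ : G.CPath x y, ∃ e ∈ W, γ.uses e

end WGraph


namespace FEAux

variable {V : Type*} (G : WGraph V)

lemma cond_nonneg (u v : V) : 0 ≤ G.cond u v := by
  unfold WGraph.cond
  split
  · exact le_of_lt (inv_pos.mpr (G.Rpos u v ‹_›))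
  · exact le_rfl

lemma cond_mul_R {u v : V} (h : G.Adj u v) : G.cond u v * G.R u v = 1 := by
  unfold WGraph.cond
  rw [if_pos h]
  exact inv_mul_cancel₀ (ne_of_gt (G.Rpos u v h))

open Classical in
lemma sum_le_twice_energy (f : V → ℝ) (hE : WGraph.energy G.cond f ≠ ⊤)
    (n : ℕ) (p : ℕ → V) (hinj : ∀ i ≤ n, ∀ j ≤ n, p i = p j → i = j) :
    ∑ k ∈ Finset.range n, G.cond (p k) (p (k+1)) * (f (p k) - f (p (k+1)))^2
      ≤ 2 * (WGraph.energy G.cond f).toReal := by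
  set t : V × V → ℝ := fun q => G.cond q.1 q.2 * (f q.1 - f q.2)^2 with ht
  have htnn : ∀ q, 0 ≤ t q := fun q => mul_nonneg (cond_nonneg G _ _) (sq_nonneg _)
  set T : ℝ≥0∞ := ∑' q : V × V, ENNReal.ofReal (t q) with hT
  have hTne : T ≠ ⊤ := by
    intro h
    apply hE
    rw [WGraph.energy, ← hT, h, ENNReal.mul_top (by norm_num)]
  have hTR : T.toReal = 2 * (WGraph.energy G.cond f).toReal := by
    rw [WGraph.energy, ← hT, ENNReal.toReal_mul]
    norm_num
    ring
  rw [← hTR]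
  set g : ℕ → V × V := fun k => (p k, p (k+1)) with hg
  have hginj : Set.InjOn g (Finset.range n) := by
    intro a ha b hb hab
    simp only [Finset.coe_range, Set.mem_Iio] at ha hb
    have : p a = p b := congrArg Prod.fst hab
    exact hinj a (by omega) b (by omega) this
  calc ∑ k ∈ Finset.range n, t (g k)
      = ∑ e ∈ (Finset.range n).image g, t e := (Finset.sum_image (fun a ha b hb h => hginj (by simpa using ha : a ∈ (Finset.range n : Set ℕ)) (by simpa using hb : b ∈ (Finset.range n : Set ℕ)) h)).symm
    _ ≤ T.toReal := by
        have h1 : ENNReal.ofReal (∑ e ∈ (Finset.range n).image g, t e)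
            = ∑ e ∈ (Finset.range n).image g, ENNReal.ofReal (t e) :=
          ENNReal.ofReal_sum_of_nonneg (fun e _ => htnn e)
        have h2 : ∑ e ∈ (Finset.range n).image g, ENNReal.ofReal (t e) ≤ T :=
          ENNReal.sum_le_tsum _
        have h3 : ENNReal.ofReal (∑ e ∈ (Finset.range n).image g, t e) ≤ T := h1.le.trans h2
        have h4 := ENNReal.toReal_mono hTne h3
        rwa [ENNReal.toReal_ofReal (Finset.sum_nonneg fun e _ => htnn e)] at h4

lemma exists_inj_path : ∀ n : ℕ, ∀ p : ℕ → V, (∀ k < n, G.Adj (p k) (p (k+1))) →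
    ∃ m, ∃ q : ℕ → V, q 0 = p 0 ∧ q m = p n ∧ (∀ k < m, G.Adj (q k) (q (k+1))) ∧
      (∀ i ≤ m, ∀ j ≤ m, q i = q j → i = j) ∧
      (∑ k ∈ Finset.range m, G.R (q k) (q (k+1))) ≤ ∑ k ∈ Finset.range n, G.R (p k) (p (k+1)) := by
  intro n
  induction n using Nat.strong_induction_on with
  | _ n IH =>
    intro p hadj
    by_cases hinj : ∀ i ≤ n, ∀ j ≤ n, p i = p j → i = j
    · exact ⟨n, p, rfl, rfl, hadj, hinj, le_rfl⟩
    · push_neg at hinj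
      obtain ⟨i₀, hi₀, j₀, hj₀, heq₀, hne₀⟩ := hinj
      obtain ⟨i, j, hij, hjn, heq⟩ : ∃ i j, i < j ∧ j ≤ n ∧ p i = p j := by
        rcases lt_or_gt_of_ne hne₀ with h | h
        · exact ⟨i₀, j₀, h, hj₀, heq₀⟩
        · exact ⟨j₀, i₀, h, hi₀, heq₀.symm⟩
      set d := j - i with hd
      set m := n - d with hm
      set q : ℕ → V := fun k => if k ≤ i then p k else p (k + d) with hq
      clear_value q
      clear_value d m
      have hmn : m < n := by omega
      have hq0 : q 0 = p 0 := by simp [hq]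
      have hqm : q m = p n := by
        simp only [hq]
        by_cases h : m ≤ i
        · have hmi : m = i := by omega
          have hnj : n = j := by omega
          rw [if_pos h, hmi, hnj]; exact heq
        · rw [if_neg h]; congr 1; omega
      have hqs : ∀ k, k < m → (q k = p k ∧ q (k+1) = p (k+1) ∧ k + 1 ≤ i) ∨
          (q k = p j ∧ q (k+1) = p (j+1) ∧ k = i) ∨
          (q k = p (k+d) ∧ q (k+1) = p (k+1+d) ∧ i < k) := by
        intro k hk
        by_cases h1 : k + 1 ≤ i
        · left
          refine ⟨?_, ?_, h1⟩
          · simp only [hq]; rw [if_pos (by omega : k ≤ i)]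
          · simp only [hq]; rw [if_pos h1]
        · by_cases h2 : k ≤ i
          · right; left
            have hki : k = i := by omega
            refine ⟨?_, ?_, hki⟩
            · simp only [hq]; rw [if_pos h2, hki]; exact heq
            · simp only [hq]; rw [if_neg h1]; congr 1; omega
          · right; right
            refine ⟨?_, ?_, by omega⟩
            · simp only [hq]; rw [if_neg h2]
            · simp only [hq]; rw [if_neg h1]
      have hqadj : ∀ k < m, G.Adj (q k) (q (k+1)) := by
        intro k hk
        rcases hqs k hk with ⟨h1, h2, h3⟩ | ⟨h1, h2, h3⟩ | ⟨h1, h2, h3⟩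
        · rw [h1, h2]; exact hadj k (by omega)
        · rw [h1, h2]; exact hadj j (by omega)
        · rw [h1, h2]
          have e : k + 1 + d = k + d + 1 := by omega
          rw [e]; exact hadj (k + d) (by omega)
      set σ : ℕ → ℕ := fun k => if k < i then k else k + d with hσ
      clear_value σ
      have hterm : ∀ k < m, G.R (q k) (q (k+1)) = G.R (p (σ k)) (p (σ k + 1)) := by
        intro k hk
        rcases hqs k hk with ⟨h1, h2, h3⟩ | ⟨h1, h2, h3⟩ | ⟨h1, h2, h3⟩
        · rw [h1, h2]; simp only [hσ]
          rw [if_pos (by omega : k < i)]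
        · rw [h1, h2]; simp only [hσ]
          rw [if_neg (by omega : ¬ k < i)]
          have e1 : k + d = j := by omega
          rw [e1]
        · rw [h1, h2]; simp only [hσ]
          rw [if_neg (by omega : ¬ k < i)]
          have e : k + 1 + d = k + d + 1 := by omega
          rw [e]
      have hRnn : ∀ k ∈ Finset.range n, 0 ≤ G.R (p k) (p (k+1)) := by
        intro k hk
        exact le_of_lt (G.Rpos _ _ (hadj k (Finset.mem_range.mp hk)))
      have hσinj : Set.InjOn σ (Finset.range m) := by
        intro a _ b _ hab
        simp only [hσ] at hab
        split_ifs at hab <;> omega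
      have hσmap : ∀ k ∈ Finset.range m, σ k ∈ Finset.range n := by
        intro k hk
        simp only [Finset.mem_range] at hk ⊢
        simp only [hσ]
        split_ifs <;> omega
      have hsum : ∑ k ∈ Finset.range m, G.R (q k) (q (k+1))
          ≤ ∑ k ∈ Finset.range n, G.R (p k) (p (k+1)) := by
        calc ∑ k ∈ Finset.range m, G.R (q k) (q (k+1))
            = ∑ k ∈ Finset.range m, G.R (p (σ k)) (p (σ k + 1)) :=
              Finset.sum_congr rfl fun k hk => hterm k (Finset.mem_range.mp hk)
          _ = ∑ e ∈ (Finset.range m).image σ, G.R (p e) (p (e + 1)) :=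
              (Finset.sum_image (f := fun e => G.R (p e) (p (e + 1))) fun a ha b hb h =>
                hσinj (Finset.mem_coe.mpr ha) (Finset.mem_coe.mpr hb) h).symm
          _ ≤ ∑ k ∈ Finset.range n, G.R (p k) (p (k+1)) := by
              apply Finset.sum_le_sum_of_subset_of_nonneg
              · intro e he
                obtain ⟨k, hk, rfl⟩ := Finset.mem_image.mp he
                exact hσmap k hk
              · intro k hk _
                exact hRnn k hk
      obtain ⟨m', q', h0, hm', hadj', hinj', hsum'⟩ := IH m hmn q hqadj
      exact ⟨m', q', h0.trans hq0, hm'.trans hqm, hadj', hinj', hsum'.trans hsum⟩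


open Classical in
lemma path_bound (f : V → ℝ) (hE : WGraph.energy G.cond f ≠ ⊤)
    (n : ℕ) (p : ℕ → V) (hadj : ∀ k < n, G.Adj (p k) (p (k+1))) :
    (f (p n) - f (p 0))^2 ≤
      (∑ k ∈ Finset.range n, G.R (p k) (p (k+1))) * (2 * (WGraph.energy G.cond f).toReal) := by
  obtain ⟨m, q, h0, hm, hadj', hinj, hsum⟩ := exists_inj_path G n p hadj
  rw [← h0, ← hm]
  have hRq : ∀ k ∈ Finset.range m, (0:ℝ) ≤ G.R (q k) (q (k+1)) := fun k hk =>
    le_of_lt (G.Rpos _ _ (hadj' k (Finset.mem_range.mp hk)))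
  have key : (f (q m) - f (q 0))^2 ≤ (∑ k ∈ Finset.range m, G.R (q k) (q (k+1))) *
      (∑ k ∈ Finset.range m, G.cond (q k) (q (k+1)) * (f (q k) - f (q (k+1)))^2) := by
    have htel : f (q m) - f (q 0) = ∑ k ∈ Finset.range m, (f (q (k+1)) - f (q k)) :=
      (Finset.sum_range_sub (fun k => f (q k)) m).symm
    rw [htel]
    have hdecomp : ∀ k ∈ Finset.range m, f (q (k+1)) - f (q k) =
        Real.sqrt (G.R (q k) (q (k+1))) *
          (Real.sqrt (G.cond (q k) (q (k+1))) * (f (q (k+1)) - f (q k))) := by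
      intro k hk
      have hAdj := hadj' k (Finset.mem_range.mp hk)
      have h1 : Real.sqrt (G.R (q k) (q (k+1))) * Real.sqrt (G.cond (q k) (q (k+1))) = 1 := by
        rw [← Real.sqrt_mul (hRq k hk), mul_comm (G.R (q k) (q (k+1))),
          cond_mul_R G hAdj, Real.sqrt_one]
      rw [← mul_assoc, h1, one_mul]
    rw [Finset.sum_congr rfl hdecomp]
    calc (∑ k ∈ Finset.range m, Real.sqrt (G.R (q k) (q (k+1))) *
            (Real.sqrt (G.cond (q k) (q (k+1))) * (f (q (k+1)) - f (q k))))^2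
        ≤ (∑ k ∈ Finset.range m, Real.sqrt (G.R (q k) (q (k+1)))^2) *
            (∑ k ∈ Finset.range m, (Real.sqrt (G.cond (q k) (q (k+1))) * (f (q (k+1)) - f (q k)))^2) :=
          Finset.sum_mul_sq_le_sq_mul_sq _ _ _
      _ = (∑ k ∈ Finset.range m, G.R (q k) (q (k+1))) *
            (∑ k ∈ Finset.range m, G.cond (q k) (q (k+1)) * (f (q k) - f (q (k+1)))^2) := by
          congr 1
          · exact Finset.sum_congr rfl fun k hk => Real.sq_sqrt (hRq k hk)
          · refine Finset.sum_congr rfl fun k hk => ?_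
            rw [mul_pow, Real.sq_sqrt (cond_nonneg G _ _)]
            congr 1
            rw [← neg_sub (f (q k)) (f (q (k+1))), neg_pow, neg_one_sq]
            ring
  have key2 := sum_le_twice_energy G f hE m q hinj
  have hRqsum : (0:ℝ) ≤ ∑ k ∈ Finset.range m, G.R (q k) (q (k+1)) := Finset.sum_nonneg hRq
  have hEnn : (0:ℝ) ≤ 2 * (WGraph.energy G.cond f).toReal := by positivity
  calc (f (q m) - f (q 0))^2
      ≤ (∑ k ∈ Finset.range m, G.R (q k) (q (k+1))) *
        (∑ k ∈ Finset.range m, G.cond (q k) (q (k+1)) * (f (q k) - f (q (k+1)))^2) := key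
    _ ≤ (∑ k ∈ Finset.range m, G.R (q k) (q (k+1))) * (2 * (WGraph.energy G.cond f).toReal) :=
        mul_le_mul_of_nonneg_left key2 hRqsum
    _ ≤ (∑ k ∈ Finset.range n, G.R (p k) (p (k+1))) * (2 * (WGraph.energy G.cond f).toReal) :=
        mul_le_mul_of_nonneg_right hsum hEnn

end FEAux


/-- functions of finite energy are (Hölder-)uniformly continuous,
`|f(w) - f(v)|² ≤ 4 B(f,f) d(v,w)`, and extend uniquely and continuously to
the completion. -/
theorem finiteEnergy_extends {V : Type*} [MetricSpace V] [Countable V]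
    (G : WGraph V) (hmet : G.IsPathMetric) (hconn : G.Connected)
    (f : V → ℝ) (hE : WGraph.energy G.cond f ≠ ⊤) :
    (∀ v w : V, |f w - f v| ^ 2 ≤ 4 * (WGraph.energy G.cond f).toReal * dist v w) ∧
    (∃! Φ : UniformSpace.Completion V → ℝ, Continuous Φ ∧ ∀ v : V, Φ ↑v = f v) := by
  set E := (WGraph.energy G.cond f).toReal with hEdef
  have hE0 : 0 ≤ E := ENNReal.toReal_nonneg
  have hbound : ∀ v w : V, |f w - f v| ^ 2 ≤ 4 * E * dist v w := by
    intro v w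
    rw [sq_abs]
    have hL : ∀ L ∈ G.pathLengths v w, (f w - f v)^2 ≤ L * (2 * E) := by
      rintro L ⟨n, p, hp0, hpn, hadj, rfl⟩
      have := FEAux.path_bound G f hE n p hadj
      rwa [hp0, hpn] at this
    have hd : dist v w = sInf (G.pathLengths v w) := hmet v w
    have hdnn : 0 ≤ dist v w := dist_nonneg
    rcases eq_or_lt_of_le hE0 with hEz | hEpos
    · obtain ⟨L, hLmem⟩ := hconn v w
      have := hL L hLmem
      rw [← hEz] at this ⊢
      simp only [mul_zero, zero_mul] at this ⊢
      exact this
    · have h2E : (0:ℝ) < 2 * E := by linarith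
      have hle : (f w - f v)^2 / (2 * E) ≤ sInf (G.pathLengths v w) := by
        apply le_csInf (hconn v w)
        intro L hLmem
        rw [div_le_iff₀ h2E]
        exact hL L hLmem
      rw [div_le_iff₀ h2E] at hle
      rw [← hd] at hle
      nlinarith
  refine ⟨hbound, ?_⟩
  have huc : UniformContinuous f := by
    rw [Metric.uniformContinuous_iff]
    intro ε hε
    refine ⟨ε^2 / (4 * E + 1), by positivity, ?_⟩
    intro a b hab
    have h1 := hbound b a
    rw [Real.dist_eq]
    have h2 : |f a - f b|^2 < ε^2 := by
      have hdc : dist b a = dist a b := dist_comm b a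
      have hK : (0:ℝ) < 4*E+1 := by linarith
      have h3 : |f a - f b|^2 ≤ (4*E+1) * dist a b := by
        refine h1.trans ?_
        rw [hdc]
        nlinarith [dist_nonneg (x := a) (y := b)]
      have h4 : |f a - f b|^2 < (4*E+1) * (ε^2/(4*E+1)) :=
        lt_of_le_of_lt h3 (mul_lt_mul_of_pos_left hab hK)
      rwa [mul_comm, div_mul_cancel₀ _ (ne_of_gt hK)] at h4
    exact lt_of_pow_lt_pow_left₀ 2 (le_of_lt hε) h2
  refine ⟨UniformSpace.Completion.extension f,
    ⟨UniformSpace.Completion.continuous_extension,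
      fun v => UniformSpace.Completion.extension_coe huc v⟩, ?_⟩
  rintro Φ ⟨hΦc, hΦcoe⟩
  refine UniformSpace.Completion.ext hΦc UniformSpace.Completion.continuous_extension ?_
  intro a
  rw [hΦcoe, UniformSpace.Completion.extension_coe huc]
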